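/- For m, n ∈ ℕ with m ≥ 3 odd, the map ι_n : ZMod m × {±1}^(n−1) → II*(Z_m^n), ι_n(q, ε_1, …, ε_{n−1}) := {v ∈ (ZMod m)^n : v_1 + Σ_{i=1}^{n−1} ε_i v_{i+1} ∈ {q, q+2, …, q+m−3} (mod m)}, is a bijection onto the set of maximum independent sets of the discrete torus Z_m^n. -/

import Mathlib

/-- The discrete torus `Z_m^n`: the graph on `(ZMod m)^n` where two vertices are adjacent
iff they differ by `±1 (mod m)` in exactly one coordinate. -/
def torus (m n : ℕ) : SimpleGraph (Fin n → ZMod m) :=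
  SimpleGraph.fromRel fun u v =>
    ∃ j : Fin n, (u j = v j + 1 ∨ u j = v j - 1) ∧ ∀ i : Fin n, i ≠ j → u i = v i

/-- A set of vertices is independent if its vertices are pairwise non-adjacent. -/
def IsIndep {V : Type*} (G : SimpleGraph V) (s : Set V) : Prop :=
  s.Pairwise fun u v => ¬ G.Adj u v

/-- `N_G(X) := (⋃ x ∈ X, N_G(x)) \ X`. -/
def nbhd {V : Type*} (G : SimpleGraph V) (X : Set V) : Set V :=
  (⋃ x ∈ X, G.neighborSet x) \ X

/-- `N_G(X, Y) := N_G(X) ∩ Y`. -/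
def nbhdIn {V : Type*} (G : SimpleGraph V) (X Y : Set V) : Set V :=
  nbhd G X ∩ Y

/-- `E_m^n(p)`: the vertices of `Z_m^n` whose coordinate sum is `p` modulo `m`. -/
def Eclass (m n : ℕ) (p : ZMod m) : Set (Fin n → ZMod m) :=
  {v | ∑ i, v i = p}

/-- A maximum independent set: an independent set of the largest possible cardinality. -/
def MaxIndep {V : Type*} (G : SimpleGraph V) (s : Set V) : Prop :=
  IsIndep G s ∧ ∀ t : Set V, IsIndep G t → t.ncard ≤ s.ncard

/-- The map `ι_n`: `ι_n(q, ε₁, …, ε_{n−1})` is the set of vertices `v` of `Z_m^n` with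
`v₁ + Σ_{i=1}^{n-1} ε_i v_{i+1} ∈ {q, q+2, …, q+m−3} (mod m)` (for odd `m`, this set of
residues is `{q + 2j : 0 ≤ j < ⌊m/2⌋}`). -/
def iota (m n : ℕ) (q : ZMod m) (ε : Fin (n - 1) → ℤˣ) : Set (Fin n → ZMod m) :=
  {v | ∃ j : ℕ, j < m / 2 ∧
    (∑ i : Fin n, (if _h : i.1 = 0 then (1 : ZMod m)
        else (((ε ⟨i.1 - 1, by have := i.isLt; omega⟩ : ℤˣ) : ℤ) : ZMod m)) * v i)
      = q + 2 * (j : ZMod m)}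



namespace Stmt6

/-- The arc set `{q + 2j : j < k}` in `ZMod m`. -/
def Sset (m k : ℕ) (q : ZMod m) : Set (ZMod m) :=
  {x | ∃ j : ℕ, j < k ∧ x = q + 2 * (j : ZMod m)}

variable {m k : ℕ}

lemma int_ne_zmod (hmk : m = 2 * k + 1) {x : ℤ} (hx : x ≠ 0) (hb : |x| < (m : ℤ)) :
    (x : ZMod m) ≠ 0 := by
  intro h
  rw [ZMod.intCast_zmod_eq_zero_iff_dvd] at h
  exact hx (Int.eq_zero_of_abs_lt_dvd h hb)

lemma two_ne (hmk : m = 2 * k + 1) (hk : 1 ≤ k) : (2 : ZMod m) ≠ 0 := by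
  have h2 : |(2:ℤ)| = 2 := by norm_num
  have := int_ne_zmod (x := 2) hmk (by norm_num) (by omega)
  simpa using this

lemma four_ne (hmk : m = 2 * k + 1) (hk : 1 ≤ k) : (4 : ZMod m) ≠ 0 := by
  intro h
  have h4 : ((4 : ℤ) : ZMod m) = 0 := by push_cast; simpa using h
  rw [ZMod.intCast_zmod_eq_zero_iff_dvd] at h4
  have hle : (m : ℤ) ≤ 4 := Int.le_of_dvd (by norm_num) h4
  have hm3 : m = 3 := by omega
  subst hm3
  norm_num at h4

lemma S_not_adj (hmk : m = 2 * k + 1) {q x y : ZMod m}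
    (hx : x ∈ Sset m k q) (hy : y ∈ Sset m k q) : x ≠ y + 1 := by
  obtain ⟨j, hj, rfl⟩ := hx
  obtain ⟨j', hj', rfl⟩ := hy
  intro h
  have h0 : ((2 * (j : ℤ) - 2 * (j' : ℤ) - 1 : ℤ) : ZMod m) = 0 := by
    push_cast
    linear_combination h
  exact int_ne_zmod hmk (by omega) (by rw [abs_lt]; omega) h0

end Stmt6

namespace Stmt6
variable {m k : ℕ}

lemma one_ne (hmk : m = 2 * k + 1) (hk : 1 ≤ k) : (1 : ZMod m) ≠ 0 := by
  have := int_ne_zmod (x := 1) hmk (by norm_num) (by rw [abs_one]; omega)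
  simpa using this

lemma odd_dvd (hmk : m = 2 * k + 1) {t : ℕ} (h : m ∣ 2 * t) : m ∣ t := by
  have hcop : Nat.Coprime m 2 := by
    rw [Nat.coprime_comm]
    exact (Nat.Prime.coprime_iff_not_dvd Nat.prime_two).mpr (by omega)
  exact hcop.dvd_of_dvd_mul_left h

lemma S_mem_self (hk : 1 ≤ k) (q : ZMod m) : q ∈ Sset m k q :=
  ⟨0, hk, by simp⟩

lemma S_card (hmk : m = 2 * k + 1) (q : ZMod m) : (Sset m k q).ncard = k := by
  have he : Sset m k q = (fun j : ℕ => q + 2 * (j : ZMod m)) '' ↑(Finset.range k) := by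
    ext x
    simp only [Sset, Set.mem_setOf_eq, Set.mem_image, Finset.coe_range, Set.mem_Iio]
    constructor
    · rintro ⟨j, hj, rfl⟩; exact ⟨j, hj, rfl⟩
    · rintro ⟨j, hj, rfl⟩; exact ⟨j, hj, rfl⟩
  rw [he, Set.ncard_image_of_injOn, Set.ncard_coe_finset, Finset.card_range]
  rintro j hj j' hj' h
  simp only [Finset.coe_range, Set.mem_Iio] at hj hj'
  by_contra hne
  have h0 : ((2 * (j : ℤ) - 2 * (j' : ℤ) : ℤ) : ZMod m) = 0 := by
    push_cast
    linear_combination h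
  exact int_ne_zmod hmk (by omega) (by rw [abs_lt]; omega) h0

lemma S_inj (hmk : m = 2 * k + 1) (hk : 1 ≤ k) {a a' : ZMod m}
    (h : Sset m k a = Sset m k a') : a = a' := by
  obtain ⟨j, hj, hja⟩ := h ▸ S_mem_self hk a
  obtain ⟨j', hj', hja'⟩ := h.symm ▸ S_mem_self hk a'
  have h0 : ((2 * (j + j' : ℕ) : ℕ) : ZMod m) = 0 := by
    push_cast
    linear_combination -hja - hja'
  rw [ZMod.natCast_eq_zero_iff] at h0
  have hdvd := odd_dvd hmk h0
  have hj0 : j = 0 := by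
    rcases Nat.eq_zero_or_pos (j + j') with h0' | h0'
    · omega
    · exact absurd (Nat.le_of_dvd h0' hdvd) (by omega)
  rw [hja, hj0]; simp

lemma cycle_bound (hmk : m = 2 * k + 1) (hk : 1 ≤ k) {t : Set (ZMod m)}
    (hind : ∀ x ∈ t, ∀ y ∈ t, x ≠ y + 1) : t.ncard ≤ k := by
  haveI : NeZero m := ⟨by omega⟩
  set f : t × Bool → ZMod m := fun p => p.1.1 + (if p.2 then 1 else 0) with hf
  have hinj : Function.Injective f := by
    rintro ⟨⟨x, hx⟩, b⟩ ⟨⟨y, hy⟩, c⟩ h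
    simp only [hf] at h
    cases b <;> cases c <;> norm_num at h <;>
      simp only [Prod.mk.injEq, Subtype.mk.injEq]
    · exact ⟨h, trivial⟩
    · exact absurd h (hind x hx y hy)
    · exact absurd h.symm (hind y hy x hx)
    · exact ⟨h, trivial⟩
  have hcard : Nat.card (t × Bool) ≤ Nat.card (ZMod m) :=
    Nat.card_le_card_of_injective f hinj
  rw [Nat.card_prod, Nat.card_coe_set_eq, Nat.card_eq_fintype_card, Fintype.card_bool,
    Nat.card_zmod] at hcard
  omega

lemma cycle_max (hmk : m = 2 * k + 1) (hk : 1 ≤ k) {t : Set (ZMod m)}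
    (hind : ∀ x ∈ t, ∀ y ∈ t, x ≠ y + 1) (hcard : t.ncard = k) :
    ∃ a, t = Sset m k a := by
  haveI : NeZero m := ⟨by omega⟩
  have hmcard : Nat.card (ZMod m) = m := Nat.card_zmod m
  have himage : (fun x => x + 1) '' t ⊆ tᶜ := by
    rintro _ ⟨x, hx, rfl⟩ hmem
    exact hind _ hmem _ hx rfl
  have hic : ((fun x => x + 1) '' t).ncard = k := by
    rw [Set.ncard_image_of_injective _ (add_left_injective 1)]; exact hcard
  have hcompl : tᶜ.ncard = k + 1 := by
    have h1 := Set.ncard_add_ncard_compl t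
    rw [hcard] at h1
    omega
  obtain ⟨b, hbc, hbi⟩ : ∃ b ∈ tᶜ, b ∉ (fun x => x + 1) '' t := by
    by_contra hno
    push_neg at hno
    have := Set.ncard_le_ncard hno (Set.toFinite _)
    omega
  have hb_t : b ∉ t := hbc
  have heq : (fun x => x + 1) '' t = tᶜ \ {b} := by
    refine Set.eq_of_subset_of_ncard_le ?_ ?_ (Set.toFinite _)
    · rintro _ ⟨x, hx, rfl⟩
      exact ⟨himage ⟨x, hx, rfl⟩, fun hxb => hbi ⟨x, hx, hxb⟩⟩
    · rw [Set.ncard_diff_singleton_of_mem hbc, hcompl, hic]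
      omega
  have P : ∀ x, x ∉ t → x ≠ b → x - 1 ∈ t := by
    intro x hx hxb
    have hx' : x ∈ tᶜ \ {b} := ⟨hx, hxb⟩
    rw [← heq] at hx'
    obtain ⟨y, hy, hyx⟩ := hx'
    have : y = x - 1 := by linear_combination hyx
    rwa [← this]
  have step : ∀ j : ℕ, j < k → (b + 1 + 2 * (j : ZMod m)) ∈ t ∧ (b + 2 + 2 * (j : ZMod m)) ∉ t := by
    intro j
    induction j with
    | zero =>
      intro _
      have h1 : b + 1 ∈ t := by
        by_contra hb1
        have hxb : b + 1 ≠ b := by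
          intro h
          exact one_ne hmk hk (by linear_combination h)
        have := P (b + 1) hb1 hxb
        rw [add_sub_cancel_right] at this
        exact hb_t this
      constructor
      · have e0 : b + 1 + 2 * ((0 : ℕ) : ZMod m) = b + 1 := by push_cast; ring
        rw [e0]; exact h1
      · intro hc
        exact hind _ hc _ h1 (by push_cast; ring)
    | succ j ih =>
      intro hj
      obtain ⟨h1, h2⟩ := ih (by omega)
      have h3 : b + 1 + 2 * ((j + 1 : ℕ) : ZMod m) ∈ t := by
        by_contra hc
        have hneb : b + 1 + 2 * ((j + 1 : ℕ) : ZMod m) ≠ b := by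
          intro h
          have h0 : ((2 * j + 3 : ℕ) : ZMod m) = 0 := by
            push_cast at h ⊢
            linear_combination h
          rw [ZMod.natCast_eq_zero_iff] at h0
          have := Nat.le_of_dvd (by omega) h0
          omega
        have hP := P _ hc hneb
        have hx : b + 1 + 2 * ((j + 1 : ℕ) : ZMod m) - 1 = b + 2 + 2 * (j : ZMod m) := by
          push_cast; ring
        rw [hx] at hP
        exact h2 hP
      refine ⟨h3, fun hc => hind _ hc _ h3 (by push_cast; ring)⟩
  refine ⟨b + 1, ?_⟩
  have hsub : Sset m k (b + 1) ⊆ t := by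
    rintro x ⟨j, hj, rfl⟩
    exact (step j hj).1
  exact (Set.eq_of_subset_of_ncard_le hsub
    (by rw [hcard, S_card hmk]) (Set.toFinite t)).symm

end Stmt6

namespace Stmt6
variable {m k : ℕ}

lemma m_cast_zero (hmk : m = 2 * k + 1) : ((2 * k + 1 : ℕ) : ZMod m) = 0 := by
  rw [← hmk]; exact ZMod.natCast_self m

lemma S_disj (hmk : m = 2 * k + 1) (hk : 1 ≤ k) {a a' : ZMod m}
    (h : ∀ x, x ∈ Sset m k a → x ∉ Sset m k a') : a' = a + 1 ∨ a' = a - 1 := by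
  haveI : NeZero m := ⟨by omega⟩
  by_contra hc
  push_neg at hc
  obtain ⟨h1, h2⟩ := hc
  have hm0 : ((2 * k + 1 : ℕ) : ZMod m) = 0 := m_cast_zero hmk
  push_cast at hm0
  set r : ZMod m := a - a' with hr
  set t0 : ZMod m := ((k : ZMod m) + 1) * r with ht0
  have h2t : 2 * t0 = r := by
    rw [ht0]
    linear_combination r * hm0
  have hval : ((t0.val : ℕ) : ZMod m) = t0 := ZMod.natCast_zmod_val t0
  have htv : t0.val < m := ZMod.val_lt t0
  set tv := t0.val with htvdef
  rcases lt_or_ge tv k with hcase | hcase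
  · -- a = a' + 2 * tv : common element a
    exact h a (S_mem_self hk a) ⟨tv, hcase, by linear_combination -h2t - 2 * hval⟩
  · rcases eq_or_lt_of_le hcase with hcase2 | hcase2
    · -- tv = k : r = -1, a' = a + 1
      refine absurd ?_ h1
      have hkt : ((k : ℕ) : ZMod m) = t0 := by rw [hcase2]; exact hval
      linear_combination h2t + 2 * hkt - hm0
    · rcases eq_or_lt_of_le (Nat.succ_le_of_lt hcase2) with hcase3 | hcase3
      · -- tv = k + 1 : r = 1, a' = a - 1
        refine absurd ?_ h2
        have hkt : (k : ZMod m) + 1 = t0 := by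
          have h' := hval
          rw [← hcase3] at h'
          push_cast at h'
          exact h'
        linear_combination h2t + 2 * hkt - hm0
      · -- tv ≥ k + 2 : common element a' = a + 2 * (m - tv)
        have hj : m - tv < k := by omega
        refine h (a + 2 * ((m - tv : ℕ) : ZMod m)) ⟨m - tv, hj, rfl⟩ ⟨0, hk, ?_⟩
        have hcast : ((m - tv : ℕ) : ZMod m) = (m : ZMod m) - ((tv : ℕ) : ZMod m) := by
          push_cast [Nat.cast_sub (le_of_lt htv)]
          ring
        have hmz : ((m : ℕ) : ZMod m) = 0 := ZMod.natCast_self m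
        push_cast [hcast]
        linear_combination 2 * hmz - 2 * hval - h2t
end Stmt6


namespace Stmt6
variable {m k n : ℕ}

lemma torus_adj {N : ℕ} {u v : Fin N → ZMod m} :
    (torus m N).Adj u v ↔ u ≠ v ∧
      ∃ j, (u j = v j + 1 ∨ u j = v j - 1) ∧ ∀ i, i ≠ j → u i = v i := by
  rw [torus, SimpleGraph.fromRel_adj]
  constructor
  · rintro ⟨hne, h | h⟩
    · exact ⟨hne, h⟩
    · obtain ⟨j, hj, hrest⟩ := h
      refine ⟨hne, j, ?_, fun i hi => (hrest i hi).symm⟩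
      rcases hj with h | h
      · right; rw [h]; ring
      · left; rw [h]; ring
  · rintro ⟨hne, h⟩
    exact ⟨hne, Or.inl h⟩

lemma adj_cons_line (hmk : m = 2 * k + 1) (hk : 1 ≤ k) {x y : ZMod m} (w : Fin n → ZMod m)
    (hxy : x = y + 1 ∨ x = y - 1) : (torus m (n + 1)).Adj (Fin.cons x w) (Fin.cons y w) := by
  have hne : x ≠ y := by
    rcases hxy with h | h <;> intro he
    · exact one_ne hmk hk (by linear_combination he - h)
    · exact one_ne hmk hk (by linear_combination h - he)
  rw [torus_adj]
  refine ⟨?_, 0, ?_, ?_⟩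
  · intro hc
    exact hne (by have := congrFun hc 0; simpa using this)
  · simpa using hxy
  · intro i hi
    obtain ⟨j, rfl⟩ := Fin.exists_succ_eq.mpr hi
    simp [Fin.cons_succ]

lemma adj_cons_step (hmk : m = 2 * k + 1) (hk : 1 ≤ k) (x : ZMod m) (w : Fin n → ZMod m)
    (i0 : Fin n) :
    (torus m (n + 1)).Adj (Fin.cons x (w + Pi.single i0 1)) (Fin.cons x w) := by
  rw [torus_adj]
  refine ⟨?_, i0.succ, ?_, ?_⟩
  · intro hc
    have h := congrFun hc i0.succ
    simp only [Fin.cons_succ, Pi.add_apply, Pi.single_eq_same] at h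
    exact one_ne hmk hk (by linear_combination h)
  · left
    simp [Fin.cons_succ, Pi.single_eq_same]
  · intro i hi
    induction i using Fin.cases with
    | zero => simp
    | succ j =>
      have hji : j ≠ i0 := fun h => hi (by rw [h])
      simp [Fin.cons_succ, Pi.single_eq_of_ne hji]

def lineSet (s : Set (Fin (n + 1) → ZMod m)) (w : Fin n → ZMod m) : Set (ZMod m) :=
  {x | Fin.cons x w ∈ s}

lemma indep_line (hmk : m = 2 * k + 1) (hk : 1 ≤ k) {s : Set (Fin (n + 1) → ZMod m)}
    (hind : IsIndep (torus m (n + 1)) s) (w : Fin n → ZMod m) :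
    ∀ x ∈ lineSet s w, ∀ y ∈ lineSet s w, x ≠ y + 1 := by
  intro x hx y hy he
  have hadj := adj_cons_line hmk hk w (Or.inl he)
  exact hind hx hy hadj.ne hadj

lemma card_decomp [NeZero m] (s : Set (Fin (n + 1) → ZMod m)) :
    s.ncard = ∑ w : Fin n → ZMod m, (lineSet s w).ncard := by
  classical
  rw [← Nat.card_coe_set_eq]
  have e : ↥s ≃ Σ w : Fin n → ZMod m, ↥(lineSet s w) :=
    { toFun := fun v => ⟨Fin.tail v.1, v.1 0, by
        have : Fin.cons (v.1 0) (Fin.tail v.1) = v.1 := Fin.cons_self_tail v.1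
        simpa [lineSet, this] using v.2⟩
      invFun := fun p => ⟨Fin.cons p.2.1 p.1, p.2.2⟩
      left_inv := fun v => Subtype.ext (Fin.cons_self_tail v.1)
      right_inv := fun p => rfl }
  rw [Nat.card_congr e, Nat.card_eq_fintype_card, Fintype.card_sigma]
  exact Finset.sum_congr rfl fun w _ => by
    rw [← Nat.card_eq_fintype_card, Nat.card_coe_set_eq]

def Lmap (ε : Fin n → ℤˣ) (v : Fin (n + 1) → ZMod m) : ZMod m :=
  v 0 + ∑ i : Fin n, (((ε i : ℤ) : ZMod m)) * v i.succ

lemma mem_iota (hmk : m = 2 * k + 1) {q : ZMod m} {ε : Fin n → ℤˣ}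
    {v : Fin (n + 1) → ZMod m} :
    v ∈ iota m (n + 1) q ε ↔ Lmap ε v ∈ Sset m k q := by
  have hdiv : m / 2 = k := by omega
  unfold iota Sset Lmap
  simp only [Set.mem_setOf_eq, hdiv]
  have hsum : (∑ i : Fin (n + 1), (if _h : i.1 = 0 then (1 : ZMod m)
        else (((ε ⟨i.1 - 1, by have := i.isLt; omega⟩ : ℤˣ) : ℤ) : ZMod m)) * v i)
      = v 0 + ∑ i : Fin n, (((ε i : ℤ) : ZMod m)) * v i.succ := by
    rw [Fin.sum_univ_succ, dif_pos (by simp), one_mul]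
    congr 1
  rw [hsum]

end Stmt6

namespace Stmt6
variable {m k n : ℕ}

lemma Lmap_cons (ε : Fin n → ℤˣ) (x : ZMod m) (w : Fin n → ZMod m) :
    Lmap ε (Fin.cons x w) = x + ∑ i : Fin n, (((ε i : ℤ) : ZMod m)) * w i := by
  unfold Lmap
  simp [Fin.cons_zero, Fin.cons_succ]

lemma line_iota (hmk : m = 2 * k + 1) {q : ZMod m} {ε : Fin n → ℤˣ} (w : Fin n → ZMod m) :
    lineSet (iota m (n + 1) q ε) w
      = Sset m k (q - ∑ i : Fin n, (((ε i : ℤ) : ZMod m)) * w i) := by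
  ext x
  show Fin.cons x w ∈ iota m (n + 1) q ε ↔ _
  rw [mem_iota hmk, Lmap_cons]
  constructor
  · rintro ⟨j, hj, h⟩
    exact ⟨j, hj, by linear_combination h⟩
  · rintro ⟨j, hj, h⟩
    exact ⟨j, hj, by linear_combination h⟩

lemma iota_indep (hmk : m = 2 * k + 1) (hk : 1 ≤ k) (q : ZMod m) (ε : Fin n → ℤˣ) :
    IsIndep (torus m (n + 1)) (iota m (n + 1) q ε) := by
  intro u hu v hv hne hadj
  rw [torus_adj] at hadj
  obtain ⟨-, j, hj, hrest⟩ := hadj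
  rw [mem_iota hmk] at hu hv
  have key : Lmap ε u = Lmap ε v + 1 ∨ Lmap ε u = Lmap ε v - 1 := by
    induction j using Fin.cases with
    | zero =>
      have hs : (∑ i : Fin n, (((ε i : ℤ) : ZMod m)) * u i.succ)
          = ∑ i : Fin n, (((ε i : ℤ) : ZMod m)) * v i.succ :=
        Finset.sum_congr rfl fun i _ => by rw [hrest i.succ (Fin.succ_ne_zero i)]
      unfold Lmap
      rcases hj with h | h
      · left; linear_combination h + hs
      · right; linear_combination h + hs
    | succ j0 =>
      have hu0 : u 0 = v 0 := hrest 0 (Fin.succ_ne_zero j0).symm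
      have hs : (∑ i : Fin n, (((ε i : ℤ) : ZMod m)) * u i.succ)
            - ∑ i : Fin n, (((ε i : ℤ) : ZMod m)) * v i.succ
          = ((ε j0 : ℤ) : ZMod m) * u j0.succ - ((ε j0 : ℤ) : ZMod m) * v j0.succ := by
        rw [← Finset.sum_sub_distrib]
        rw [Finset.sum_eq_single j0]
        · intro i _ hi
          rw [hrest i.succ (by simpa [Fin.succ_inj] using hi)]
          ring
        · intro h; exact absurd (Finset.mem_univ j0) h
      rcases Int.units_eq_one_or (ε j0) with he | he
      · have hc : ((ε j0 : ℤ) : ZMod m) = 1 := by rw [he]; norm_num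
        rw [hc] at hs
        rcases hj with h | h
        · left; unfold Lmap; linear_combination hu0 + hs + h
        · right; unfold Lmap; linear_combination hu0 + hs + h
      · have hc : ((ε j0 : ℤ) : ZMod m) = -1 := by rw [he]; norm_num
        rw [hc] at hs
        rcases hj with h | h
        · right; unfold Lmap; linear_combination hu0 + hs - h
        · left; unfold Lmap; linear_combination hu0 + hs - h
  rcases key with h | h
  · exact S_not_adj hmk hu hv h
  · exact S_not_adj hmk hv hu (by linear_combination -h)

lemma iota_card (hmk : m = 2 * k + 1) (hk : 1 ≤ k) (q : ZMod m) (ε : Fin n → ℤˣ) :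
    (iota m (n + 1) q ε).ncard = k * m ^ n := by
  haveI : NeZero m := ⟨by omega⟩
  rw [card_decomp]
  · calc (∑ w : Fin n → ZMod m, (lineSet (iota m (n + 1) q ε) w).ncard)
        = ∑ w : Fin n → ZMod m, k := by
          refine Finset.sum_congr rfl fun w _ => ?_
          rw [line_iota hmk, S_card hmk]
    _ = k * m ^ n := by
          rw [Finset.sum_const, Finset.card_univ, Fintype.card_fun, ZMod.card,
            Fintype.card_fin, smul_eq_mul, mul_comm]

lemma indep_card_le (hmk : m = 2 * k + 1) (hk : 1 ≤ k) {s : Set (Fin (n + 1) → ZMod m)}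
    (hind : IsIndep (torus m (n + 1)) s) : s.ncard ≤ k * m ^ n := by
  haveI : NeZero m := ⟨by omega⟩
  rw [card_decomp]
  calc (∑ w : Fin n → ZMod m, (lineSet s w).ncard)
      ≤ ∑ w : Fin n → ZMod m, k :=
        Finset.sum_le_sum fun w _ => cycle_bound hmk hk (indep_line hmk hk hind w)
  _ = k * m ^ n := by
        rw [Finset.sum_const, Finset.card_univ, Fintype.card_fun, ZMod.card,
          Fintype.card_fin, smul_eq_mul, mul_comm]

lemma maxIndep_iff (hmk : m = 2 * k + 1) (hk : 1 ≤ k) {s : Set (Fin (n + 1) → ZMod m)} :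
    MaxIndep (torus m (n + 1)) s ↔ IsIndep (torus m (n + 1)) s ∧ s.ncard = k * m ^ n := by
  constructor
  · rintro ⟨hind, hmax⟩
    refine ⟨hind, le_antisymm (indep_card_le hmk hk hind) ?_⟩
    have h := hmax (iota m (n + 1) 0 (fun _ => 1)) (iota_indep hmk hk 0 _)
    rw [iota_card hmk hk] at h
    exact h
  · rintro ⟨hind, hcard⟩
    exact ⟨hind, fun t ht => hcard ▸ indep_card_le hmk hk ht⟩

lemma S_shift {q c x : ZMod m} : x ∈ Sset m k (q + c) ↔ x - c ∈ Sset m k q := by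
  constructor
  · rintro ⟨j, hj, h⟩
    exact ⟨j, hj, by linear_combination h⟩
  · rintro ⟨j, hj, h⟩
    exact ⟨j, hj, by linear_combination h⟩

lemma surj (hmk : m = 2 * k + 1) (hk : 1 ≤ k) {s : Set (Fin (n + 1) → ZMod m)}
    (hind : IsIndep (torus m (n + 1)) s) (hcard : s.ncard = k * m ^ n) :
    ∃ (q : ZMod m) (ε : Fin n → ℤˣ), iota m (n + 1) q ε = s := by
  haveI : NeZero m := ⟨by omega⟩
  have hone : (1 : ZMod m) ≠ -1 := fun h => two_ne hmk hk (by linear_combination h)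
  have hle : ∀ w, (lineSet s w).ncard ≤ k :=
    fun w => cycle_bound hmk hk (indep_line hmk hk hind w)
  have hlines : ∀ w, (lineSet s w).ncard = k := by
    by_contra hno
    push_neg at hno
    obtain ⟨w0, hw0⟩ := hno
    have hlt : s.ncard < k * m ^ n := by
      rw [card_decomp s]
      calc (∑ w : Fin n → ZMod m, (lineSet s w).ncard)
          < ∑ w : Fin n → ZMod m, k :=
            Finset.sum_lt_sum (fun w _ => hle w)
              ⟨w0, Finset.mem_univ _, lt_of_le_of_ne (hle w0) hw0⟩
      _ = k * m ^ n := by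
            rw [Finset.sum_const, Finset.card_univ, Fintype.card_fun, ZMod.card,
              Fintype.card_fin, smul_eq_mul, mul_comm]
    omega
  have hstruct : ∀ w, ∃ a, lineSet s w = Sset m k a :=
    fun w => cycle_max hmk hk (indep_line hmk hk hind w) (hlines w)
  choose a ha using hstruct
  have hdisj : ∀ (i : Fin n) (w : Fin n → ZMod m),
      a (w + Pi.single i 1) = a w + 1 ∨ a (w + Pi.single i 1) = a w - 1 := by
    intro i w
    refine S_disj hmk hk ?_
    intro x hx hx'
    rw [← ha w] at hx
    rw [← ha _] at hx'
    have hadj := adj_cons_step hmk hk x w i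
    exact hind hx' hx hadj.ne hadj
  set D : Fin n → (Fin n → ZMod m) → ZMod m :=
    fun i w => a (w + Pi.single i 1) - a w with hDdef
  have hD1 : ∀ i w, D i w = 1 ∨ D i w = -1 := by
    intro i w
    rcases hdisj i w with h | h
    · left; simp only [hDdef]; linear_combination h
    · right; simp only [hDdef]; linear_combination h
  -- a(v + σᵢ) = a v + D i v
  have haD : ∀ i v, a (v + Pi.single i 1) = a v + D i v := by
    intro i v; simp only [hDdef]; ring
  -- constancy of increments along direction i
  have const_dir : ∀ (i : Fin n) (w : Fin n → ZMod m) (c : ZMod m),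
      D i (w + Pi.single i c) = D i w := by
    intro i w c
    -- counting argument over the i-cycle through w
    classical
    set g : ZMod m → ZMod m := fun c => a (w + Pi.single i c) with hgdef
    have hgstep : ∀ c : ZMod m, g (c + 1) = g c + D i (w + Pi.single i c) := by
      intro c
      simp only [hgdef]
      rw [Pi.single_add, ← add_assoc]
      exact haD i (w + Pi.single i c)
    have hpm : ∀ c : ZMod m, g (c + 1) - g c = 1 ∨ g (c + 1) - g c = -1 := by
      intro c
      rcases hD1 i (w + Pi.single i c) with h | h <;> rw [hgstep c, h] <;> [left; right] <;> ring
    have hsum0 : (∑ c : ZMod m, (g (c + 1) - g c)) = 0 := by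
      rw [Finset.sum_sub_distrib]
      have he : (∑ c : ZMod m, g (c + 1)) = ∑ c : ZMod m, g c :=
        Fintype.sum_equiv (Equiv.addRight 1) _ _ (fun c => rfl)
      rw [he, sub_self]
    set T : Finset (ZMod m) := Finset.univ.filter (fun c => g (c + 1) - g c = 1) with hT
    have hpart1 : (∑ c ∈ Finset.univ.filter (fun c => g (c + 1) - g c = 1), (g (c + 1) - g c))
        = (T.card : ZMod m) := by
      rw [Finset.sum_congr rfl (fun c hc => (Finset.mem_filter.mp hc).2),
        Finset.sum_const, nsmul_eq_mul, mul_one]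
    have hpart2 : (∑ c ∈ Finset.univ.filter (fun c => ¬(g (c + 1) - g c = 1)), (g (c + 1) - g c))
        = -(((Finset.univ.filter (fun c => ¬(g (c + 1) - g c = 1))).card : ZMod m)) := by
      have hbody : ∀ c ∈ Finset.univ.filter (fun c => ¬(g (c + 1) - g c = 1)),
          g (c + 1) - g c = -1 := by
        intro c hc
        rcases hpm c with h | h
        · exact absurd h (Finset.mem_filter.mp hc).2
        · exact h
      rw [Finset.sum_congr rfl hbody, Finset.sum_const, nsmul_eq_mul, mul_neg_one]
    have hTsum : (∑ c : ZMod m, (g (c + 1) - g c))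
        = (T.card : ZMod m) - ((Finset.univ.filter (fun c => ¬(g (c + 1) - g c = 1))).card : ZMod m) := by
      rw [← Finset.sum_filter_add_sum_filter_not Finset.univ (fun c => g (c + 1) - g c = 1),
        hpart1, hpart2]
      ring
    have hcards : T.card + (Finset.univ.filter (fun c => ¬(g (c + 1) - g c = 1))).card = m := by
      rw [Finset.card_filter_add_card_filter_not]
      simp [ZMod.card]
    have hdvd : m ∣ 2 * T.card := by
      have h2 : ((2 * T.card : ℕ) : ZMod m) = 0 := by
        push_cast
        rw [hsum0] at hTsum
        have : ((Finset.univ.filter (fun c => ¬(g (c + 1) - g c = 1))).card : ZMod m)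
            = ((m - T.card : ℕ) : ZMod m) := by
          congr 1
          omega
        rw [this] at hTsum
        have hmz : ((m : ℕ) : ZMod m) = 0 := ZMod.natCast_self m
        push_cast [Nat.cast_sub (show T.card ≤ m by omega)] at hTsum
        linear_combination hmz - hTsum
      rwa [ZMod.natCast_eq_zero_iff] at h2
    have hdvd' := odd_dvd hmk hdvd
    have hTcase : T.card = 0 ∨ T.card = m := by
      have hTle : T.card ≤ m := by omega
      rcases Nat.eq_zero_or_pos T.card with h0 | h0
      · exact Or.inl h0
      · exact Or.inr (le_antisymm hTle (Nat.le_of_dvd h0 hdvd'))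
    -- all increments equal
    have hconst : ∀ c : ZMod m, g (c + 1) - g c = g (0 + 1) - g 0 := by
      intro c'
      rcases hTcase with h0 | h0
      · have hallm : ∀ c : ZMod m, g (c + 1) - g c = -1 := by
          intro c
          rcases hpm c with h | h
          · exfalso
            have : c ∈ T := Finset.mem_filter.mpr ⟨Finset.mem_univ _, h⟩
            rw [Finset.card_eq_zero.mp h0] at this
            exact absurd this (Finset.notMem_empty c)
          · exact h
        rw [hallm c', hallm 0]
      · have hTuniv : T = Finset.univ := Finset.eq_univ_of_card T (by rw [h0]; simp [ZMod.card])
        have hallp : ∀ c : ZMod m, g (c + 1) - g c = 1 := by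
          intro c
          have : c ∈ T := hTuniv ▸ Finset.mem_univ c
          exact (Finset.mem_filter.mp this).2
        rw [hallp c', hallp 0]
    have hc := hconst c
    have hg0 : g (0 + 1) - g 0 = D i w := by
      simp only [hgdef]
      norm_num
      rfl
    rw [hg0] at hc
    have : g (c + 1) - g c = D i (w + Pi.single i c) := by rw [hgstep c]; ring
    rw [this] at hc
    exact hc
  -- cross-direction constancy (single step)
  have hDstep_cross : ∀ (i i' : Fin n) (w : Fin n → ZMod m), i' ≠ i →
      D i (w + Pi.single i' 1) = D i w := by
    intro i i' w hne
    by_contra hne2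
    have sq : ∀ v : Fin n → ZMod m,
        D i' (v + Pi.single i 1) = D i' v + D i (v + Pi.single i' 1) - D i v := by
      intro v
      have harg : v + Pi.single i 1 + Pi.single i' 1 = v + Pi.single i' 1 + Pi.single i 1 := by
        rw [add_right_comm]
      simp only [hDdef]
      rw [harg]
      ring
    -- δ' = -δ
    have hdd : D i (w + Pi.single i' 1) = -(D i w) := by
      rcases hD1 i w with h1 | h1 <;> rcases hD1 i (w + Pi.single i' 1) with h2 | h2
      · exact absurd (h2.trans h1.symm) hne2
      · rw [h1, h2]
      · rw [h1, h2]; ring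
      · exact absurd (h2.trans h1.symm) hne2
    have ht1 : D i' (w + Pi.single i 1) = D i' w - 2 * D i w := by
      rw [sq w, hdd]; ring
    have ht2 : D i' (w + Pi.single i 1 + Pi.single i 1)
        = D i' (w + Pi.single i 1) - 2 * D i w := by
      have hsq := sq (w + Pi.single i 1)
      have hDa : D i (w + Pi.single i 1) = D i w := by
        have := const_dir i w 1
        simpa using this
      have hDb : D i (w + Pi.single i 1 + Pi.single i' 1) = -(D i w) := by
        have harg : w + Pi.single i 1 + Pi.single i' 1 = (w + Pi.single i' 1) + Pi.single i 1 := by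
          rw [add_right_comm]
        rw [harg]
        have := const_dir i (w + Pi.single i' 1) 1
        rw [this, hdd]
      rw [hsq, hDb, hDa]
      ring
    -- τ₁ = -τ₀
    have hflip : ∀ x y : ZMod m, (x = 1 ∨ x = -1) → (y = 1 ∨ y = -1) →
        y = x - 2 * D i w → y = -x := by
      intro x y hx hy hrel
      rcases hD1 i w with hd | hd <;> rw [hd] at hrel <;>
        rcases hx with rfl | rfl <;> rcases hy with rfl | rfl
      · exact absurd (by linear_combination hrel) (two_ne hmk hk)
      · norm_num
      · exact absurd (by linear_combination hrel) (four_ne hmk hk)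
      · exact absurd (by linear_combination hrel) (two_ne hmk hk)
      · exact absurd (by linear_combination -hrel) (two_ne hmk hk)
      · exact absurd (by linear_combination -hrel) (four_ne hmk hk)
      · norm_num
      · exact absurd (by linear_combination -hrel) (two_ne hmk hk)
    have h1 := hflip _ _ (hD1 i' w) (hD1 i' (w + Pi.single i 1)) ht1
    have h2 := hflip _ _ (hD1 i' (w + Pi.single i 1))
      (hD1 i' (w + Pi.single i 1 + Pi.single i 1)) ht2
    -- τ₂ = τ₀ but τ₂ = τ₀ - 4δ
    have hzero : (4 : ZMod m) * D i w = 0 := by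
      linear_combination ht1 + h1 + ht2 - h2
    rcases hD1 i w with hd | hd <;> rw [hd] at hzero
    · exact four_ne hmk hk (by linear_combination hzero)
    · exact four_ne hmk hk (by linear_combination -hzero)
  -- arbitrary shifts
  have hstep : ∀ (i : Fin n) (v : Fin n → ZMod m) (i' : Fin n) (c : ZMod m),
      D i (v + Pi.single i' c) = D i v := by
    intro i v i' c
    rcases eq_or_ne i' i with rfl | hne
    · exact const_dir i' v c
    · have hnat : ∀ t : ℕ, D i (v + Pi.single i' (t : ZMod m)) = D i v := by
        intro t
        induction t with
        | zero => simp
        | succ t ih =>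
          have harg : v + Pi.single i' ((t + 1 : ℕ) : ZMod m)
              = (v + Pi.single i' (t : ZMod m)) + Pi.single i' 1 := by
            push_cast
            rw [add_assoc, ← Pi.single_add]
          rw [harg, hDstep_cross i i' _ hne, ih]
      rw [← ZMod.natCast_zmod_val c]
      exact hnat c.val
  -- D i is globally constant
  have hDconst : ∀ (i : Fin n) (w : Fin n → ZMod m), D i w = D i 0 := by
    intro i w
    have hA : ∀ A : Finset (Fin n), D i (∑ i' ∈ A, Pi.single i' (w i')) = D i 0 := by
      intro A
      induction A using Finset.induction with
      | empty => rw [Finset.sum_empty]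
      | insert _ _ hnotmem _ =>
        rename_i a' A' ih
        rw [Finset.sum_insert hnotmem, add_comm, hstep, ih]
    have := hA Finset.univ
    rwa [Finset.univ_sum_single] at this
  -- affine formula
  have hstep1 : ∀ (w : Fin n → ZMod m) (i' : Fin n) (c : ZMod m),
      a (w + Pi.single i' c) = a w + D i' 0 * c := by
    intro w i' c
    have hnat : ∀ t : ℕ, a (w + Pi.single i' (t : ZMod m)) = a w + D i' 0 * t := by
      intro t
      induction t with
      | zero => simp
      | succ t ih =>
        have harg : w + Pi.single i' ((t + 1 : ℕ) : ZMod m)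
            = (w + Pi.single i' (t : ZMod m)) + Pi.single i' 1 := by
          push_cast
          rw [add_assoc, ← Pi.single_add]
        rw [harg, haD, hDconst, ih]
        push_cast
        ring
    rw [← ZMod.natCast_zmod_val c]
    exact hnat c.val
  have haffine : ∀ w : Fin n → ZMod m, a w = a 0 + ∑ i : Fin n, D i 0 * w i := by
    intro w
    have hA : ∀ A : Finset (Fin n),
        a (∑ i' ∈ A, Pi.single i' (w i')) = a 0 + ∑ i' ∈ A, D i' 0 * w i' := by
      intro A
      induction A using Finset.induction with
      | empty => rw [Finset.sum_empty, Finset.sum_empty, add_zero]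
      | insert _ _ hnotmem _ =>
        rename_i a' A' ih
        rw [Finset.sum_insert hnotmem]
        have harg : Pi.single a' (w a') + (∑ x ∈ A', Pi.single x (w x))
            = (∑ x ∈ A', Pi.single x (w x)) + Pi.single a' (w a') := add_comm _ _
        rw [harg, hstep1, ih, Finset.sum_insert hnotmem]
        ring
    have := hA Finset.univ
    rwa [Finset.univ_sum_single] at this
  -- conclude
  refine ⟨a 0, fun i => if D i 0 = 1 then -1 else 1, ?_⟩
  have hcast : ∀ i : Fin n,
      (((if D i 0 = 1 then (-1 : ℤˣ) else 1 : ℤˣ) : ℤ) : ZMod m) = -(D i 0) := by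
    intro i
    rcases hD1 i 0 with hd | hd
    · rw [if_pos hd, hd]
      norm_num
    · rw [if_neg (by rw [hd]; exact fun h => hone h.symm), hd]
      norm_num
  ext v
  rw [mem_iota hmk]
  have hL : Lmap (fun i => if D i 0 = 1 then (-1 : ℤˣ) else 1) v
      = v 0 - ∑ i : Fin n, D i 0 * v i.succ := by
    unfold Lmap
    rw [sub_eq_add_neg, ← Finset.sum_neg_distrib]
    congr 1
    refine Finset.sum_congr rfl fun i _ => ?_
    rw [hcast i]
    ring
  rw [hL]
  have hmem : v ∈ s ↔ v 0 ∈ Sset m k (a (Fin.tail v)) := by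
    rw [← ha (Fin.tail v)]
    show _ ↔ Fin.cons (v 0) (Fin.tail v) ∈ s
    rw [Fin.cons_self_tail]
  rw [hmem, haffine (Fin.tail v)]
  have htail : ∀ i : Fin n, Fin.tail v i = v i.succ := fun i => rfl
  rw [show (∑ i : Fin n, D i 0 * Fin.tail v i) = ∑ i : Fin n, D i 0 * v i.succ from
    Finset.sum_congr rfl fun i _ => by rw [htail]]
  rw [S_shift]


lemma iota_inj (hmk : m = 2 * k + 1) (hk : 1 ≤ k) {q q' : ZMod m} {ε ε' : Fin n → ℤˣ}
    (h : iota m (n + 1) q ε = iota m (n + 1) q' ε') : q = q' ∧ ε = ε' := by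
  haveI : NeZero m := ⟨by omega⟩
  have hone : (1 : ZMod m) ≠ -1 := fun hx => two_ne hmk hk (by linear_combination hx)
  have hmem : ∀ v, Lmap ε v ∈ Sset m k q ↔ Lmap ε' v ∈ Sset m k q' := by
    intro v
    rw [← mem_iota hmk, ← mem_iota hmk, h]
  have h0 : ∀ x : ZMod m, x ∈ Sset m k q ↔ x ∈ Sset m k q' := by
    intro x
    have := hmem (Fin.cons x 0)
    rw [Lmap_cons, Lmap_cons] at this
    simpa using this
  have hq : q = q' := S_inj hmk hk (Set.ext h0)
  subst hq
  refine ⟨rfl, funext fun i => ?_⟩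
  have hsum : ∀ δ : Fin n → ℤˣ, (∑ j : Fin n, ((δ j : ℤ) : ZMod m) * (Pi.single (M := fun _ => ZMod m) i 1 j))
      = ((δ i : ℤ) : ZMod m) := by
    intro δ
    rw [Finset.sum_eq_single i]
    · rw [Pi.single_eq_same, mul_one]
    · intro j _ hj
      rw [Pi.single_eq_of_ne hj, mul_zero]
    · intro hni
      exact absurd (Finset.mem_univ i) hni
  have h1 : ∀ x : ZMod m,
      x + ((ε i : ℤ) : ZMod m) ∈ Sset m k q ↔ x + ((ε' i : ℤ) : ZMod m) ∈ Sset m k q := by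
    intro x
    have := hmem (Fin.cons x (Pi.single i 1))
    rw [Lmap_cons, Lmap_cons, hsum, hsum] at this
    exact this
  set e : ZMod m := ((ε i : ℤ) : ZMod m) with he
  set e' : ZMod m := ((ε' i : ℤ) : ZMod m) with he'
  have h2 : ∀ y : ZMod m, y ∈ Sset m k q ↔ y + (e' - e) ∈ Sset m k q := by
    intro y
    have := h1 (y - e)
    rw [sub_add_cancel] at this
    rw [this]
    constructor
    · intro hy
      have : y - e + e' = y + (e' - e) := by ring
      rwa [this] at hy
    · intro hy
      have : y - e + e' = y + (e' - e) := by ring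
      rwa [this]
  have hSeq : Sset m k (q + (e' - e)) = Sset m k q := by
    ext y
    rw [S_shift]
    constructor
    · intro hy
      have h3 := (h2 (y - (e' - e))).mp hy
      rwa [sub_add_cancel] at h3
    · intro hy
      exact (h2 (y - (e' - e))).mpr (by rwa [sub_add_cancel])
  have hee : e' = e := by
    have := S_inj hmk hk hSeq
    linear_combination this
  rcases Int.units_eq_one_or (ε i) with hu | hu <;> rcases Int.units_eq_one_or (ε' i) with hu' | hu'
  · rw [hu, hu']
  · exfalso
    rw [he] at hee; rw [he'] at hee
    rw [hu, hu'] at hee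
    norm_num at hee
    exact hone hee.symm
  · exfalso
    rw [he] at hee; rw [he'] at hee
    rw [hu, hu'] at hee
    norm_num at hee
    exact hone hee
  · rw [hu, hu']
end Stmt6

/-- For `m ≥ 3` odd, `ι_n` is a bijection from `ZMod m × {±1}^(n-1)` onto the set of
maximum independent sets of `Z_m^n`. -/
theorem stmt_6 (m n : ℕ) (hm : 3 ≤ m) (hmo : Odd m) (hn : 1 ≤ n) :
    Set.BijOn (fun x : ZMod m × (Fin (n - 1) → ℤˣ) => iota m n x.1 x.2)
      Set.univ {s : Set (Fin n → ZMod m) | MaxIndep (torus m n) s} := by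
  obtain ⟨k, hmk, hk⟩ : ∃ k, m = 2 * k + 1 ∧ 1 ≤ k := by
    obtain ⟨c, hc⟩ := hmo
    exact ⟨c, by omega, by omega⟩
  obtain ⟨n', rfl⟩ : ∃ n', n = n' + 1 := ⟨n - 1, by omega⟩
  refine ⟨?_, ?_, ?_⟩
  · rintro ⟨q, ε⟩ -
    rw [Set.mem_setOf_eq, Stmt6.maxIndep_iff hmk hk]
    exact ⟨Stmt6.iota_indep hmk hk q ε, Stmt6.iota_card hmk hk q ε⟩
  · rintro ⟨q, ε⟩ - ⟨q', ε'⟩ - h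
    obtain ⟨hq, he⟩ := Stmt6.iota_inj hmk hk h
    exact Prod.ext hq he
  · intro s hs
    rw [Set.mem_setOf_eq, Stmt6.maxIndep_iff hmk hk] at hs
    obtain ⟨q, ε, heq⟩ := Stmt6.surj hmk hk hs.1 hs.2
    exact ⟨(q, ε), Set.mem_univ _, heq⟩
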